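/- Let φ : [a, 0] → ℝ be continuous on [a,0], differentiable on (a,0), with a < 0, and suppose φ'(t) ≥ -K|t|^{-1/2} for all t ∈ (a, 0) at which φ(t) > 2|t|^{1/2}. If φ(0) ≤ C₁ and φ is nonnegative, then φ(a) ≤ max(2|a|^{1/2}, C₁ + 2K|a|^{1/2}). -/

import Mathlib

lemma psi_mono_aux (a b K : ℝ) (hab : a < b) (hb0 : b ≤ 0) (φ φ' : ℝ → ℝ)
    (hcont : ContinuousOn φ (Set.Icc a b))
    (hdiff : ∀ t ∈ Set.Ioo a b, HasDerivAt φ (φ' t) t)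
    (hineq : ∀ t ∈ Set.Ioo a b, -K * (Real.sqrt (-t))⁻¹ ≤ φ' t) :
    φ a - 2 * K * Real.sqrt (-a) ≤ φ b - 2 * K * Real.sqrt (-b) := by
  set ψ : ℝ → ℝ := fun t => φ t - 2 * K * Real.sqrt (-t) with hψ
  have hderiv : ∀ t ∈ Set.Ioo a b, HasDerivAt ψ (φ' t + K * (Real.sqrt (-t))⁻¹) t := by
    intro t ht
    have htneg : 0 < -t := by have := ht.2; linarith [lt_of_lt_of_le ht.2 hb0]
    have hsq : 0 < Real.sqrt (-t) := Real.sqrt_pos.2 htneg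
    have h1 : HasDerivAt (fun t : ℝ => Real.sqrt (-t)) (1 / (2 * Real.sqrt (-t)) * (-1)) t :=
      (Real.hasDerivAt_sqrt (ne_of_gt htneg)).comp t (hasDerivAt_neg t)
    have h2 : HasDerivAt (fun t : ℝ => 2 * K * Real.sqrt (-t))
        (2 * K * (1 / (2 * Real.sqrt (-t)) * (-1))) t := h1.const_mul _
    have h3 := (hdiff t ht).sub h2
    refine h3.congr_deriv ?_
    rw [one_div, mul_inv]
    ring
  have hcont' : ContinuousOn ψ (Set.Icc a b) :=
    hcont.sub ((continuous_const.mul (Real.continuous_sqrt.comp continuous_neg)).continuousOn)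
  have hmono : MonotoneOn ψ (Set.Icc a b) := by
    apply monotoneOn_of_deriv_nonneg (convex_Icc a b) hcont'
    · intro t ht
      rw [interior_Icc] at ht
      exact (hderiv t ht).differentiableAt.differentiableWithinAt
    · intro t ht
      rw [interior_Icc] at ht
      rw [(hderiv t ht).deriv]
      have htneg : 0 < -t := lt_of_lt_of_le (by linarith [ht.2, hb0] : (0:ℝ) < -t) le_rfl
      have := hineq t ht
      linarith
  exact hmono (Set.left_mem_Icc.2 hab.le) (Set.right_mem_Icc.2 hab.le) hab.le

/- STATEMENT 7: Barrier version of the integration argument: if φ ≥ 0 is continuous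
on [a,0], differentiable on (a,0), φ(0) ≤ C₁, and φ'(t) ≥ -K|t|^{-1/2} whenever
φ(t) > 2|t|^{1/2}, then φ(a) ≤ max(2|a|^{1/2}, C₁ + 2K|a|^{1/2}). -/
theorem barrier_integration
    (a K C₁ : ℝ) (ha : a < 0) (hK : 0 < K) (hC₁ : 0 ≤ C₁)
    (φ φ' : ℝ → ℝ)
    (hcont : ContinuousOn φ (Set.Icc a 0))
    (hdiff : ∀ t ∈ Set.Ioo a 0, HasDerivAt φ (φ' t) t)
    (hineq : ∀ t ∈ Set.Ioo a 0, 2 * Real.sqrt |t| < φ t →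
      -K * (Real.sqrt |t|)⁻¹ ≤ φ' t)
    (h0 : φ 0 ≤ C₁)
    (hnonneg : ∀ t ∈ Set.Icc a 0, 0 ≤ φ t) :
    φ a ≤ max (2 * Real.sqrt |a|) (C₁ + 2 * K * Real.sqrt |a|) := by
  have habs : |a| = -a := abs_of_nonpos ha.le
  rcases le_or_gt (φ a) (2 * Real.sqrt |a|) with h | h
  · exact le_max_of_le_left h
  by_cases hall : ∀ t ∈ Set.Ioo a 0, 2 * Real.sqrt |t| < φ t
  · have key := psi_mono_aux a 0 K ha le_rfl φ φ' hcont hdiff (fun t ht => by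
      have h2 := hineq t ht (hall t ht)
      rwa [abs_of_nonpos ht.2.le] at h2)
    refine le_max_of_le_right ?_
    rw [habs]
    simp only [neg_zero, Real.sqrt_zero, mul_zero, sub_zero] at key
    linarith
  · push_neg at hall
    obtain ⟨t₀, ht₀, ht₀le⟩ := hall
    set S : Set ℝ := Set.Icc a 0 ∩ (fun t => φ t - 2 * Real.sqrt |t|) ⁻¹' Set.Iic 0 with hS
    have hSclosed : IsClosed S := by
      have hc : ContinuousOn (fun t => φ t - 2 * Real.sqrt |t|) (Set.Icc a 0) :=
        hcont.sub ((continuous_const.mul (Real.continuous_sqrt.comp continuous_abs)).continuousOn)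
      exact hc.preimage_isClosed_of_isClosed isClosed_Icc isClosed_Iic
    have hne : S.Nonempty := ⟨t₀, ⟨⟨ht₀.1.le, ht₀.2.le⟩, by simp [Set.mem_preimage]; linarith⟩⟩
    have hbdd : BddBelow S := ⟨a, fun x hx => hx.1.1⟩
    set b := sInf S with hb
    have hbS : b ∈ S := hSclosed.csInf_mem hne hbdd
    have hble : a ≤ b := hbS.1.1
    have hb0 : b ≤ 0 := hbS.1.2
    have hbbar : φ b ≤ 2 * Real.sqrt |b| := by
      have := hbS.2
      simp only [Set.mem_preimage, Set.mem_Iic] at this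
      linarith
    have hab : a < b := by
      rcases lt_or_eq_of_le hble with h' | h'
      · exact h'
      · exfalso; rw [← h'] at hbbar; linarith
    have habove : ∀ t ∈ Set.Ioo a b, 2 * Real.sqrt |t| < φ t := by
      intro t ht
      by_contra hcon
      push_neg at hcon
      have htS : t ∈ S := ⟨⟨ht.1.le, le_of_lt (lt_of_lt_of_le ht.2 hb0)⟩, by
        simp only [Set.mem_preimage, Set.mem_Iic]; linarith⟩
      exact absurd (csInf_le hbdd htS) (not_le.2 ht.2)
    have key := psi_mono_aux a b K hab hb0 φ φ'
      (hcont.mono (Set.Icc_subset_Icc le_rfl hb0))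
      (fun t ht => hdiff t ⟨ht.1, lt_of_lt_of_le ht.2 hb0⟩)
      (fun t ht => by
        have ht' : t ∈ Set.Ioo a 0 := ⟨ht.1, lt_of_lt_of_le ht.2 hb0⟩
        have h2 := hineq t ht' (habove t ht)
        rwa [abs_of_nonpos ht'.2.le] at h2)
    have hbabs : |b| = -b := abs_of_nonpos hb0
    rw [hbabs] at hbbar
    set r := Real.sqrt (-a) with hr
    set s := Real.sqrt (-b) with hs
    have hsr : s ≤ r := Real.sqrt_le_sqrt (by linarith)
    have hs0 : 0 ≤ s := Real.sqrt_nonneg _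
    rw [habs]
    rcases le_or_gt K 1 with hK1 | hK1
    · refine le_max_of_le_left ?_
      nlinarith [mul_nonneg (sub_nonneg.2 hsr) (sub_nonneg.2 hK1)]
    · refine le_max_of_le_right ?_
      nlinarith [mul_nonneg hs0 (le_of_lt (sub_pos.2 hK1))]
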